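/- The differential operators s₀ = ζ∂_ζ − ℓ, s₊ = (ζ/2)·((x + x⁻¹)(2ℓ − ζ∂_ζ) − (x² − 1)∂_x), s₋ = (ζ⁻¹/2)·((x + x⁻¹)ζ∂_ζ − (x² − 1)∂_x), acting on smooth (or formal) functions of two variables ζ, x, satisfy the sl(2) commutation relations [s₀, s±] = ±s±, [s₊, s₋] = 2s₀. -/

import Mathlib

open Complex

/-- Partial derivative in the first variable of a function on `ℂ × ℂ`. -/
noncomputable def pd1 (G : ℂ × ℂ → ℂ) (p : ℂ × ℂ) : ℂ := fderiv ℂ G p (1, 0)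

/-- Partial derivative in the second variable of a function on `ℂ × ℂ`. -/
noncomputable def pd2 (G : ℂ × ℂ → ℂ) (p : ℂ × ℂ) : ℂ := fderiv ℂ G p (0, 1)

section toolkit
variable {f g : ℂ × ℂ → ℂ} {p v : ℂ × ℂ} {c : ℂ}

lemma fdv_mul (hf : DifferentiableAt ℂ f p) (hg : DifferentiableAt ℂ g p) :
    fderiv ℂ (fun q => f q * g q) p v = fderiv ℂ f p v * g p + f p * fderiv ℂ g p v := by
  rw [fderiv_fun_mul hf hg]
  simp only [ContinuousLinearMap.add_apply, ContinuousLinearMap.smul_apply, smul_eq_mul]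
  ring

lemma fdv_add (hf : DifferentiableAt ℂ f p) (hg : DifferentiableAt ℂ g p) :
    fderiv ℂ (fun q => f q + g q) p v = fderiv ℂ f p v + fderiv ℂ g p v := by
  rw [fderiv_fun_add hf hg]; simp

lemma fdv_sub (hf : DifferentiableAt ℂ f p) (hg : DifferentiableAt ℂ g p) :
    fderiv ℂ (fun q => f q - g q) p v = fderiv ℂ f p v - fderiv ℂ g p v := by
  rw [fderiv_fun_sub hf hg]; simp

lemma fdv_const : fderiv ℂ (fun _ : ℂ × ℂ => c) p v = 0 := by
  rw [fderiv_fun_const]; simp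

lemma fdv_div_const (hf : DifferentiableAt ℂ f p) :
    fderiv ℂ (fun q => f q / c) p v = fderiv ℂ f p v / c := by
  simp only [div_eq_mul_inv]
  rw [fderiv_mul_const hf]; simp [mul_comm]

lemma fdv_fst : fderiv ℂ (fun q : ℂ × ℂ => q.1) p v = v.1 := by
  rw [fderiv_fst]; rfl

lemma fdv_snd : fderiv ℂ (fun q : ℂ × ℂ => q.2) p v = v.2 := by
  rw [fderiv_snd]; rfl

lemma fdv_inv_snd (hx : p.2 ≠ 0) :
    fderiv ℂ (fun q : ℂ × ℂ => q.2⁻¹) p v = -(p.2 ^ 2)⁻¹ * v.2 := by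
  have h : HasFDerivAt (fun q : ℂ × ℂ => q.2⁻¹)
      ((-(p.2 ^ 2)⁻¹) • (ContinuousLinearMap.snd ℂ ℂ ℂ)) p :=
    (hasDerivAt_inv hx).comp_hasFDerivAt p (hasFDerivAt_snd)
  rw [h.fderiv]; simp [mul_comm]

lemma fdv_inv_fst (hz : p.1 ≠ 0) :
    fderiv ℂ (fun q : ℂ × ℂ => q.1⁻¹) p v = -(p.1 ^ 2)⁻¹ * v.1 := by
  have h : HasFDerivAt (fun q : ℂ × ℂ => q.1⁻¹)
      ((-(p.1 ^ 2)⁻¹) • (ContinuousLinearMap.fst ℂ ℂ ℂ)) p :=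
    (hasDerivAt_inv hz).comp_hasFDerivAt p (hasFDerivAt_fst)
  rw [h.fderiv]; simp [mul_comm]

lemma fdv_sq_snd : fderiv ℂ (fun q : ℂ × ℂ => q.2 ^ 2) p v = 2 * p.2 * v.2 := by
  have h : (fun q : ℂ × ℂ => q.2 ^ 2) = fun q : ℂ × ℂ => q.2 * q.2 := by
    funext q; ring
  rw [h, fdv_mul (by fun_prop) (by fun_prop), fdv_snd]
  ring

end toolkit

set_option maxHeartbeats 2000000 in
theorem sl2_two_variable_vector_fields (ℓ : ℂ)
    (s0 sp sm : (ℂ × ℂ → ℂ) → (ℂ × ℂ → ℂ))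
    (hs0 : ∀ G p, s0 G p = p.1 * pd1 G p - ℓ * G p)
    (hsp : ∀ G p, sp G p = p.1 / 2 *
      ((p.2 + p.2⁻¹) * (2 * ℓ * G p - p.1 * pd1 G p) - (p.2^2 - 1) * pd2 G p))
    (hsm : ∀ G p, sm G p = p.1⁻¹ / 2 *
      ((p.2 + p.2⁻¹) * (p.1 * pd1 G p) - (p.2^2 - 1) * pd2 G p))
    (F : ℂ × ℂ → ℂ) (hF : ContDiff ℂ ⊤ F) :
    ∀ p : ℂ × ℂ, p.1 ≠ 0 → p.2 ≠ 0 →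
      (s0 (sp F) p - sp (s0 F) p = sp F p) ∧
      (s0 (sm F) p - sm (s0 F) p = -(sm F p)) ∧
      (sp (sm F) p - sm (sp F) p = 2 * s0 F p) := by
  have hdF : Differentiable ℂ F := hF.differentiable (by simp)
  have hA : Differentiable ℂ (fun q => fderiv ℂ F q (1, 0)) :=
    (((hF.fderiv_right (m := ⊤) le_top).clm_apply contDiff_const).differentiable (by simp) :)
  have hB : Differentiable ℂ (fun q => fderiv ℂ F q (0, 1)) :=
    (((hF.fderiv_right (m := ⊤) le_top).clm_apply contDiff_const).differentiable (by simp) :)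
  have hs0F : s0 F = fun q => q.1 * pd1 F q - ℓ * F q := funext (hs0 F)
  have hspF : sp F = fun q => q.1 / 2 *
      ((q.2 + q.2⁻¹) * (2 * ℓ * F q - q.1 * pd1 F q) - (q.2^2 - 1) * pd2 F q) := funext (hsp F)
  have hsmF : sm F = fun q => q.1⁻¹ / 2 *
      ((q.2 + q.2⁻¹) * (q.1 * pd1 F q) - (q.2^2 - 1) * pd2 F q) := funext (hsm F)
  intro p hz hx
  obtain ⟨z, x⟩ := p
  simp only at hz hx
  have hd2 : DifferentiableAt ℂ (fderiv ℂ F) (z, x) :=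
    ((hF.fderiv_right (m := ⊤) le_top).differentiable (by simp)) (z, x)
  have hsymm : fderiv ℂ (fun q => fderiv ℂ F q (0, 1)) (z, x) (1, 0)
      = fderiv ℂ (fun q => fderiv ℂ F q (1, 0)) (z, x) (0, 1) := by
    have e1 : fderiv ℂ (fun q => fderiv ℂ F q (0, 1)) (z, x) (1, 0)
        = fderiv ℂ (fderiv ℂ F) (z, x) (1, 0) (0, 1) := by
      rw [fderiv_clm_apply hd2 (differentiableAt_const _)]
      simp
    have e2 : fderiv ℂ (fun q => fderiv ℂ F q (1, 0)) (z, x) (0, 1)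
        = fderiv ℂ (fderiv ℂ F) (z, x) (0, 1) (1, 0) := by
      rw [fderiv_clm_apply hd2 (differentiableAt_const _)]
      simp
    rw [e1, e2]
    exact (hF.contDiffAt.isSymmSndFDerivAt le_top) _ _
  refine ⟨?_, ?_, ?_⟩
  · simp only [hs0, hsp, hsm, hs0F, hspF, hsmF, pd1, pd2]
    simp (disch := first | assumption | fun_prop (disch := assumption)) only
      [fdv_mul, fdv_add, fdv_sub, fdv_const, fdv_div_const, fdv_fst, fdv_snd,
       fdv_inv_snd, fdv_inv_fst, fdv_sq_snd]
    simp only [hsymm]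
    norm_num
    set a := F (z, x) with ha
    set a1 := fderiv ℂ F (z, x) (1, 0) with ha1
    set a2 := fderiv ℂ F (z, x) (0, 1) with ha2
    set a11 := fderiv ℂ (fun q => fderiv ℂ F q (1, 0)) (z, x) (1, 0) with ha11
    set a12 := fderiv ℂ (fun q => fderiv ℂ F q (1, 0)) (z, x) (0, 1) with ha12
    set a22 := fderiv ℂ (fun q => fderiv ℂ F q (0, 1)) (z, x) (0, 1) with ha22
    clear_value a a1 a2 a11 a12 a22
    obtain ⟨u, hu', hu⟩ : ∃ u : ℂ, z⁻¹ = u ∧ z * u = 1 := ⟨z⁻¹, rfl, mul_inv_cancel₀ hz⟩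
    obtain ⟨w, hw', hw⟩ : ∃ w : ℂ, x⁻¹ = w ∧ x * w = 1 := ⟨x⁻¹, rfl, mul_inv_cancel₀ hx⟩
    have hzsq : (z ^ 2)⁻¹ = u ^ 2 := by rw [← hu']; exact (inv_pow z 2).symm
    have hxsq : (x ^ 2)⁻¹ = w ^ 2 := by rw [← hw']; exact (inv_pow x 2).symm
    rw [hw']
    ring
  · simp only [hs0, hsp, hsm, hs0F, hspF, hsmF, pd1, pd2]
    simp (disch := first | assumption | fun_prop (disch := assumption)) only
      [fdv_mul, fdv_add, fdv_sub, fdv_const, fdv_div_const, fdv_fst, fdv_snd,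
       fdv_inv_snd, fdv_inv_fst, fdv_sq_snd]
    simp only [hsymm]
    norm_num
    set a := F (z, x) with ha
    set a1 := fderiv ℂ F (z, x) (1, 0) with ha1
    set a2 := fderiv ℂ F (z, x) (0, 1) with ha2
    set a11 := fderiv ℂ (fun q => fderiv ℂ F q (1, 0)) (z, x) (1, 0) with ha11
    set a12 := fderiv ℂ (fun q => fderiv ℂ F q (1, 0)) (z, x) (0, 1) with ha12
    set a22 := fderiv ℂ (fun q => fderiv ℂ F q (0, 1)) (z, x) (0, 1) with ha22
    clear_value a a1 a2 a11 a12 a22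
    obtain ⟨u, hu', hu⟩ : ∃ u : ℂ, z⁻¹ = u ∧ z * u = 1 := ⟨z⁻¹, rfl, mul_inv_cancel₀ hz⟩
    obtain ⟨w, hw', hw⟩ : ∃ w : ℂ, x⁻¹ = w ∧ x * w = 1 := ⟨x⁻¹, rfl, mul_inv_cancel₀ hx⟩
    have hzsq : (z ^ 2)⁻¹ = u ^ 2 := by rw [← hu']; exact (inv_pow z 2).symm
    have hxsq : (x ^ 2)⁻¹ = w ^ 2 := by rw [← hw']; exact (inv_pow x 2).symm
    rw [hzsq, hu', hw']
    linear_combination (-(1/2) * u * a2 + (1/2) * u * x^2 * a2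
      - (1/2) * z * u * w * a1 - (1/2) * z * u * x * a1) * hu
  · simp only [hs0, hsp, hsm, hs0F, hspF, hsmF, pd1, pd2]
    simp (disch := first | assumption | fun_prop (disch := assumption)) only
      [fdv_mul, fdv_add, fdv_sub, fdv_const, fdv_div_const, fdv_fst, fdv_snd,
       fdv_inv_snd, fdv_inv_fst, fdv_sq_snd]
    simp only [hsymm]
    norm_num
    set a := F (z, x) with ha
    set a1 := fderiv ℂ F (z, x) (1, 0) with ha1
    set a2 := fderiv ℂ F (z, x) (0, 1) with ha2
    set a11 := fderiv ℂ (fun q => fderiv ℂ F q (1, 0)) (z, x) (1, 0) with ha11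
    set a12 := fderiv ℂ (fun q => fderiv ℂ F q (1, 0)) (z, x) (0, 1) with ha12
    set a22 := fderiv ℂ (fun q => fderiv ℂ F q (0, 1)) (z, x) (0, 1) with ha22
    clear_value a a1 a2 a11 a12 a22
    obtain ⟨u, hu', hu⟩ : ∃ u : ℂ, z⁻¹ = u ∧ z * u = 1 := ⟨z⁻¹, rfl, mul_inv_cancel₀ hz⟩
    obtain ⟨w, hw', hw⟩ : ∃ w : ℂ, x⁻¹ = w ∧ x * w = 1 := ⟨x⁻¹, rfl, mul_inv_cancel₀ hx⟩
    have hzsq : (z ^ 2)⁻¹ = u ^ 2 := by rw [← hu']; exact (inv_pow z 2).symm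
    have hxsq : (x ^ 2)⁻¹ = w ^ 2 := by rw [← hw']; exact (inv_pow x 2).symm
    rw [hzsq, hxsq, hu', hw']
    linear_combination (-(1/2)*ℓ*a - x*w*ℓ*a - (1/2)*x^2*w^2*ℓ*a + (1/2)*z*a1 + z*x*w*a1
      + (1/2)*z*x^2*w^2*a1 + (1/4)*z*u*w*a2 + (1/4)*z*u*x*a2 - (1/4)*z*u*x^2*w*a2
      - (1/4)*z*u*x^3*a2 + (1/4)*z^2*u*w^2*a1 + (1/2)*z^2*u*x*w*a1
      + (1/4)*z^2*u*x^2*a1) * hu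
      + (-(3/2)*ℓ*a - (1/2)*x*w*ℓ*a + (3/2)*z*a1 + (1/2)*z*x*w*a1) * hw
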